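/- Suppose γ_1,…,γ_p are (ε)-contours in Λ(l) at σ such that (1/2)Δ_{γ_1,…,γ_p} H^ω_{Λ(l)}(σ) ≥ c₁l − c₂ for constants c₁, c₂ ≥ 0. Then (1/2)Δ_{γ_1,…,γ_p} H^ω_{Λ(l)}(σ) ≥ (c₁/(c₁+8)) ∑_{j=1}^p |γ_j| − c₂. -/

import Mathlib

open Finset

/-! ### Basic lattice notions for the 2-D Ising model on the square Λ(l) -/

abbrev Site := ℤ × ℤ

/-- `l¹`-distance on `ℤ²`. -/
def d1 (x y : Site) : ℤ := |x.1 - y.1| + |x.2 - y.2|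

/-- `l∞`-distance on `ℤ²`. -/
def dinf (x y : Site) : ℤ := max |x.1 - y.1| |x.2 - y.2|

/-- There is a path from `x` to `y` inside `S` with steps of `d`-distance 1. -/
def ChainIn (d : Site → Site → ℤ) (S : Set Site) (x y : Site) : Prop :=
  ∃ L : List Site, L.Chain' (fun a b => d a b = 1) ∧ L.head? = some x ∧
    L.getLast? = some y ∧ ∀ a ∈ L, a ∈ S

/-- `S` is connected with respect to steps of `d`-distance 1. -/
def ConnIn (d : Site → Site → ℤ) (S : Set Site) : Prop :=
  ∀ x ∈ S, ∀ y ∈ S, ChainIn d S x y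

def lamLo (l : ℕ) : ℤ := 1 - (((l + 1) / 2 : ℕ) : ℤ)
def lamHi (l : ℕ) : ℤ := ((l / 2 : ℕ) : ℤ)

/-- The lamBox the box. -/
noncomputable def lamBox (l : ℕ) : Finset Site := Finset.Icc (lamLo l, lamLo l) (lamHi l, lamHi l)

/-- The exterior boundary `∂_ex Λ(l)`. -/
def extBdry (l : ℕ) : Set Site := {y | y ∉ lamBox l ∧ ∃ x ∈ lamBox l, d1 x y = 1}

/-- An interval of `∂_ex Λ(l)` : an `l∞`-connected subset of it. -/
def IsBdryInterval (l : ℕ) (I : Finset Site) : Prop :=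
  (↑I : Set Site) ⊆ extBdry l ∧ ConnIn dinf ↑I

/-- The four nearest neighbours of a site. -/
def nbrs (x : Site) : Finset Site :=
  {(x.1 + 1, x.2), (x.1 - 1, x.2), (x.1, x.2 + 1), (x.1, x.2 - 1)}

/-- A dual bond, recorded by its two endpoints `v`, a dual vertex `v` standing for the
point `v + (1/2, 1/2)` of the dual lattice. -/
abbrev DBond := Sym2 Site

/-- The dual bond of the nearest-neighbour bond `{x, y}`. -/
def dualBond (x y : Site) : DBond :=
  if x.2 = y.2 then s((min x.1 y.1, x.2 - 1), (min x.1 y.1, x.2))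
  else s((x.1 - 1, min x.2 y.2), (x.1, min x.2 y.2))

/-- `∂Q(Θ)` : the set of dual bonds separating `Θ` from its complement. -/
def contourOf (Θ : Finset Site) : Finset DBond :=
  Θ.biUnion fun x => ((nbrs x).filter (· ∉ Θ)).image fun y => dualBond x y

/-- `Θ` and its complement are `l¹`-connected, so that `∂Q(Θ)` is a contour. -/
def IsContourRegion (Θ : Finset Site) : Prop :=
  ConnIn d1 ↑Θ ∧ ConnIn d1 ((↑Θ : Set Site)ᶜ)

/-- `∂Q(Λ(l))`, as a set of dual bonds. -/
noncomputable def boxBdry (l : ℕ) : Finset DBond := contourOf (lamBox l)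

/-- The dual vertex `v` lies on the side `F_l^j` of `Q(Λ(l))` (`j ∈ {1,-1,2,-2}` for
right, left, top, bottom). -/
def onSide (l : ℕ) (j : ℤ) (v : Site) : Prop :=
  (j = 1 ∧ v.1 = lamHi l ∧ lamLo l - 1 ≤ v.2 ∧ v.2 ≤ lamHi l) ∨
  (j = -1 ∧ v.1 = lamLo l - 1 ∧ lamLo l - 1 ≤ v.2 ∧ v.2 ≤ lamHi l) ∨
  (j = 2 ∧ v.2 = lamHi l ∧ lamLo l - 1 ≤ v.1 ∧ v.1 ≤ lamHi l) ∨
  (j = -2 ∧ v.2 = lamLo l - 1 ∧ lamLo l - 1 ≤ v.1 ∧ v.1 ≤ lamHi l)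

/-- The set of dual bonds `γ` meets the side `F_l^j`. -/
def touches (l : ℕ) (j : ℤ) (γ : Finset DBond) : Prop :=
  ∃ e ∈ γ, ∃ v : Site, v ∈ e ∧ onSide l j v

def HorizCrossing (l : ℕ) (γ : Finset DBond) : Prop := touches l 1 γ ∧ touches l (-1) γ
def VertCrossing (l : ℕ) (γ : Finset DBond) : Prop := touches l 2 γ ∧ touches l (-2) γ

/-- `γ` is neither horizontally nor vertically crossing. -/
def NonCrossing (l : ℕ) (γ : Finset DBond) : Prop :=
  ¬ (HorizCrossing l γ ∨ VertCrossing l γ)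

/-- Two dual bonds are adjacent if they share a dual vertex. -/
def DAdj (a b : DBond) : Prop := ∃ v : Site, v ∈ a ∧ v ∈ b

/-- A set of dual bonds is connected (via shared dual vertices). -/
def DConn (S : Finset DBond) : Prop :=
  ∀ e ∈ S, ∀ f ∈ S, ∃ L : List DBond, L.Chain' DAdj ∧ L.head? = some e ∧
    L.getLast? = some f ∧ ∀ a ∈ L, a ∈ S

/-- Dual bonds separating `Θt` from `Λ(l) \ Θt` inside the lamBox. -/
noncomputable def interiorBdry (l : ℕ) (Θt : Finset Site) : Finset DBond :=
  Θt.biUnion fun x => ((nbrs x).filter fun y => y ∈ lamBox l ∧ y ∉ Θt).image fun y => dualBond x y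

/-- The sites of `Λ(l)` along the side `F_l^j`. -/
def sideSites (l : ℕ) (j : ℤ) (x : Site) : Prop :=
  x ∈ lamBox l ∧ ((j = 1 ∧ x.1 = lamHi l) ∨ (j = -1 ∧ x.1 = lamLo l) ∨
    (j = 2 ∧ x.2 = lamHi l) ∨ (j = -2 ∧ x.2 = lamLo l))

/-- The data of the distinguished connected component `γ̲ = γu` of `γ \ ∂Q(Λ(l))` and of the
region `Θ̃ = Θt` into which a non-crossing contour `γ = ∂Q(Θ)` divides the lamBox: `γu` is a
connected component of `γ \ ∂Q(Λ(l))` dividing `Λ(l)` into the `l¹`-connected pieces `Θt` and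
`Λ(l) \ Θt`, with `Θ ⊆ Θt` and `F_l^i ∪ F_l^j ⊆ ∂Q(Λ(l) \ Θt)` for untouched sides `i, j`. -/
def UnderlineData (l : ℕ) (Θ : Finset Site) (γu : Finset DBond) (Θt : Finset Site) : Prop :=
  γu ⊆ contourOf Θ \ boxBdry l ∧ DConn γu ∧
  (∀ e ∈ contourOf Θ \ boxBdry l, e ∉ γu → ∀ f ∈ γu, ¬ DAdj e f) ∧
  Θ ⊆ Θt ∧ Θt ⊆ lamBox l ∧ ConnIn d1 ↑Θt ∧ ConnIn d1 ↑(lamBox l \ Θt) ∧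
  interiorBdry l Θt = γu ∧
  ∃ i j : ℤ, (i = 1 ∨ i = -1) ∧ (j = 2 ∨ j = -2) ∧
    ¬ touches l i (contourOf Θ) ∧ ¬ touches l j (contourOf Θ) ∧
    (∀ x, sideSites l i x → x ∉ Θt) ∧ (∀ x, sideSites l j x → x ∉ Θt)

/-- `γ̄ = ∂Q(Λ(l)) ∩ ∂Q(Θ̃)`. -/
noncomputable def gammaBar (l : ℕ) (Θt : Finset Site) : Finset DBond := boxBdry l ∩ contourOf Θt

/-- `V_ex(γ)` : sites of the exterior boundary attached to dual bonds of `γ`. -/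
noncomputable def Vex (l : ℕ) (γ : Finset DBond) : Finset Site :=
  (lamBox l).biUnion fun x => (nbrs x).filter fun y => y ∉ lamBox l ∧ dualBond x y ∈ γ

/-- `T_Θ` : flip the spins in `Θ`. -/
def flipC (Θ : Finset Site) (σ : Site → ℤ) : Site → ℤ :=
  fun x => if x ∈ Θ then -σ x else σ x

/-- The Ising Hamiltonian `H^ω_{Λ(l)}(σ)` with boundary condition `ω`. -/
noncomputable def Ham (l : ℕ) (ω : Site → ℝ) (σ : Site → ℤ) : ℝ :=
  -(1/2) * ∑ x ∈ lamBox l, ∑ y ∈ (nbrs x).filter (· ∈ lamBox l), ((σ x * σ y : ℤ) : ℝ)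
    - ∑ x ∈ lamBox l, ∑ y ∈ (nbrs x).filter (· ∉ lamBox l), (σ x : ℝ) * ω y

/-- `Δ_{γ₁,…,γ_p} H^ω_{Λ(l)}(σ) = H(σ) - H(T_{γ₁}∘⋯∘T_{γ_p} σ)`, the contours being
recorded by their regions `Θ(γ_j)`. -/
noncomputable def dH (l : ℕ) (ω : Site → ℝ) (Θs : List (Finset Site)) (σ : Site → ℤ) : ℝ :=
  Ham l ω σ - Ham l ω (Θs.foldr flipC σ)

/-- `C` is an (ε)-cluster in `Λ(l)` at `σ` : a maximal `l¹`-connected component of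
`{x ∈ Λ(l) : σ_x = ε}`. -/
def IsCluster (l : ℕ) (σ : Site → ℤ) (ε : ℤ) (C : Finset Site) : Prop :=
  C.Nonempty ∧ (∀ x ∈ C, x ∈ lamBox l ∧ σ x = ε) ∧ ConnIn d1 ↑C ∧
  ∀ y ∈ lamBox l, σ y = ε → (∃ x ∈ C, d1 x y = 1) → y ∈ C

/-- The `l¹`-connected component of `x` within `S`. -/
def l1Comp (S : Set Site) (x : Site) : Set Site := {y | ChainIn d1 S x y}

/-- `C` together with the bounded components of its complement; `∂Q(fill C)` is the outer
boundary of `Q(C)`. -/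
def fill (C : Finset Site) : Set Site :=
  ↑C ∪ {x | (l1Comp ((↑C : Set Site)ᶜ) x).Finite}

/-- `Θ` is the region `Θ(γ)` of an (ε)-contour `γ` in `Λ(l)` at `σ`. -/
def IsEContour (l : ℕ) (σ : Site → ℤ) (ε : ℤ) (Θ : Finset Site) : Prop :=
  ∃ C : Finset Site, IsCluster l σ ε C ∧ (↑Θ : Set Site) = fill C

/-- A dual bond is horizontal. -/
def isHorizD (e : DBond) : Prop := ∃ v w : Site, e = s(v, w) ∧ v.2 = w.2

/-- A dual bond is vertical. -/
def isVertD (e : DBond) : Prop := ∃ v w : Site, e = s(v, w) ∧ v.1 = w.1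

open Classical in
/-- The number of horizontal dual bonds in `γ`. -/
noncomputable def horizCount (γ : Finset DBond) : ℕ := (γ.filter isHorizD).card

open Classical in
/-- The number of vertical dual bonds in `γ`. -/
noncomputable def vertCount (γ : Finset DBond) : ℕ := (γ.filter isVertD).card

/-! ### Glauber dynamics -/

/-- Configurations on a finite `Λ ⊂ ℤ²` (`true` = spin `+1`, `false` = spin `-1`). -/
abbrev Cfg (Λ : Finset Site) := ↥Λ → Bool

/-- The spin value of a Boolean. -/
def spinVal (b : Bool) : ℝ := if b then 1 else -1

/-- The Ising Hamiltonian on a general finite `Λ`. -/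
noncomputable def HamG (Λ : Finset Site) (ω : Site → ℝ) (σ : Cfg Λ) : ℝ :=
  -(1/2) * ∑ x : ↥Λ, ∑ y : ↥Λ, (if d1 ↑x ↑y = 1 then spinVal (σ x) * spinVal (σ y) else 0)
    - ∑ x : ↥Λ, ∑ y ∈ (nbrs ↑x).filter (· ∉ Λ), spinVal (σ x) * ω y

/-- The finite-volume Gibbs measure `μ^ω_Λ` at inverse temperature `β`. -/
noncomputable def gibbs (Λ : Finset Site) (ω : Site → ℝ) (β : ℝ) (σ : Cfg Λ) : ℝ :=
  Real.exp (-β * HamG Λ ω σ) / ∑ τ : Cfg Λ, Real.exp (-β * HamG Λ ω τ)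

/-- The mean of `f` under the weights `μ`. -/
noncomputable def meanW (Λ : Finset Site) (μ f : Cfg Λ → ℝ) : ℝ := ∑ σ : Cfg Λ, μ σ * f σ

/-- `σ^x` : flip the spin at `x`. -/
def flipAt (Λ : Finset Site) (σ : Cfg Λ) (x : ↥Λ) : Cfg Λ := Function.update σ x (!(σ x))

/-- The generator `A^ω_Λ` of the stochastic Ising model with flip rates `q`. -/
noncomputable def genA (Λ : Finset Site) (q : ↥Λ → Cfg Λ → ℝ) (f : Cfg Λ → ℝ) (σ : Cfg Λ) : ℝ :=
  ∑ x : ↥Λ, q x σ * (f (flipAt Λ σ x) - f σ)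

/-- The variance `μ(|f - μf|²)`. -/
noncomputable def varW (Λ : Finset Site) (μ f : Cfg Λ → ℝ) : ℝ :=
  meanW Λ μ (fun σ => |f σ - meanW Λ μ f| ^ 2)

/-- The spectral gap `gap(Λ, ω, β)` : the infimum of the Rayleigh quotients
`-μ(f A f) / μ(|f - μf|²)`. -/
noncomputable def specGap (Λ : Finset Site) (ω : Site → ℝ) (β : ℝ)
    (q : ↥Λ → Cfg Λ → ℝ) : ℝ :=
  sInf { r | ∃ f : Cfg Λ → ℝ, varW Λ (gibbs Λ ω β) f ≠ 0 ∧
    r = (- meanW Λ (gibbs Λ ω β) fun σ => f σ * genA Λ q f σ) / varW Λ (gibbs Λ ω β) f }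

/-- The `±1`-spin function of a configuration on `Λ(l)` (`0` outside the lamBox). -/
noncomputable def toSpin (l : ℕ) (σ : Cfg (lamBox l)) : Site → ℤ :=
  fun x => if h : x ∈ lamBox l then (if σ ⟨x, h⟩ then 1 else -1) else 0

/-- The magnetization at the origin, `μ^ω_{Λ(l)}(σ₀)`. -/
noncomputable def magZero (l : ℕ) (ω : Site → ℝ) (β : ℝ) : ℝ :=
  ∑ σ : Cfg (lamBox l), gibbs (lamBox l) ω β σ * ((toSpin l σ (0, 0) : ℤ) : ℝ)

/-- The favoured sign `ε_{l,ω}`. -/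
noncomputable def epsSign (l : ℕ) (ω : Site → ℝ) (β : ℝ) : ℤ :=
  if 0 ≤ magZero l ω β then 1 else -1

/-- The trap event `Γ_l` : some (ε)-contour `γ` at `σ` meets `∂Q(Λ(l))` and has
`|γ| ≥ 2δ₁ l`. -/
def GammaEvent (l : ℕ) (δ₁ : ℝ) (ε : ℤ) : Set (Cfg (lamBox l)) :=
  {σ | ∃ Θ : Finset Site, IsEContour l (toSpin l σ) ε Θ ∧
    (contourOf Θ ∩ boxBdry l).Nonempty ∧ 2 * δ₁ * l ≤ ((contourOf Θ).card : ℝ)}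

open Classical in
/-- The Gibbs probability of an event `S ⊂ Ω_{Λ(l)}`. -/
noncomputable def probOf (l : ℕ) (ω : Site → ℝ) (β : ℝ) (S : Set (Cfg (lamBox l))) : ℝ :=
  ∑ σ ∈ Finset.univ.filter (· ∈ S), gibbs (lamBox l) ω β σ

/-- Union of the contours of a list of regions. -/
def unionB (L : List (Finset Site)) : Finset DBond :=
  L.foldr (fun Θ s => contourOf Θ ∪ s) ∅

/-- Union of a list of regions. -/
def unionR (L : List (Finset Site)) : Finset Site :=
  L.foldr (· ∪ ·) ∅

/-! ### Auxiliary lemmas for Statement 7 -/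

section Aux

open Classical

lemma d1_symm (x y : Site) : d1 x y = d1 y x := by
  simp [d1, abs_sub_comm]

lemma chainIn_single {d : Site → Site → ℤ} {S : Set Site} {x : Site} (hx : x ∈ S) :
    ChainIn d S x x :=
  ⟨[x], List.isChain_singleton x, by simp, by simp, by simpa using hx⟩

lemma chainIn_step {d : Site → Site → ℤ} {S : Set Site} {x y : Site} (hx : x ∈ S)
    (hy : y ∈ S) (hxy : d x y = 1) : ChainIn d S x y :=
  ⟨[x, y], List.isChain_pair.2 hxy, by simp, by simp, by
    intro a ha; rcases List.mem_pair.1 ha with rfl | rfl <;> assumption⟩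

lemma chainIn_trans {d : Site → Site → ℤ} {S : Set Site} {x y z : Site}
    (h1 : ChainIn d S x y) (h2 : ChainIn d S y z) : ChainIn d S x z := by
  obtain ⟨L1, hc1, hh1, hl1, hm1⟩ := h1
  obtain ⟨L2, hc2, hh2, hl2, hm2⟩ := h2
  rcases L2 with _ | ⟨b, t⟩
  · simp at hh2
  have hb : b = y := by simpa using hh2
  subst hb
  rcases t with _ | ⟨c, t'⟩
  · have : b = z := by simpa using hl2
    subst this
    exact ⟨L1, hc1, hh1, hl1, hm1⟩
  · have hl2' : (c :: t').getLast? = some z := by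
      rwa [List.getLast?_cons_cons] at hl2
    refine ⟨L1 ++ c :: t', ?_, ?_, ?_, ?_⟩
    · refine List.IsChain.append hc1 (List.isChain_cons_cons.1 hc2).2 ?_
      intro a ha b' hb'
      have ha' : a = b := by simp [hl1] at ha; exact ha.symm
      have hb'' : b' = c := by simp at hb'; exact hb'.symm
      subst ha'; subst hb''
      exact (List.isChain_cons_cons.1 hc2).1
    · rcases L1 with _ | ⟨a, t1⟩
      · simp at hh1
      · simpa using hh1
    · simp [List.getLast?_append, hl2']
    · intro a ha
      rcases List.mem_append.1 ha with h | h
      · exact hm1 a h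
      · exact hm2 a (by simp [h])

lemma chainIn_symm {d : Site → Site → ℤ} (hd : ∀ a b, d a b = d b a) {S : Set Site}
    {x y : Site} (h : ChainIn d S x y) : ChainIn d S y x := by
  obtain ⟨L, hc, hh, hl, hm⟩ := h
  refine ⟨L.reverse, ?_, by simpa using hl, by simpa using hh, by simpa using hm⟩
  refine List.isChain_reverse.2 ?_
  exact hc.imp fun a b hab => by rw [hd]; exact hab

lemma chainIn_mono {d : Site → Site → ℤ} {S T : Set Site} (hST : S ⊆ T) {x y : Site}
    (h : ChainIn d S x y) : ChainIn d T x y := by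
  obtain ⟨L, hc, hh, hl, hm⟩ := h
  exact ⟨L, hc, hh, hl, fun a ha => hST (hm a ha)⟩

lemma mem_lamBox {l : ℕ} {x : Site} :
    x ∈ lamBox l ↔ lamLo l ≤ x.1 ∧ x.1 ≤ lamHi l ∧ lamLo l ≤ x.2 ∧ x.2 ≤ lamHi l := by
  cases x
  simp only [lamBox, Finset.mem_Icc, Prod.mk_le_mk]
  tauto

lemma mem_nbrs {x y : Site} : y ∈ nbrs x ↔
    y = (x.1 + 1, x.2) ∨ y = (x.1 - 1, x.2) ∨ y = (x.1, x.2 + 1) ∨ y = (x.1, x.2 - 1) := by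
  simp [nbrs]

lemma abs_eq_one_of {a b : ℤ} (h : b = a + 1 ∨ b = a - 1) : |a - b| = 1 := by
  rcases h with rfl | rfl
  · rw [show a - (a+1) = -1 by ring]; decide
  · rw [show a - (a-1) = 1 by ring]; decide

lemma d1_of_mem_nbrs {x y : Site} (h : y ∈ nbrs x) : d1 x y = 1 := by
  rcases mem_nbrs.1 h with rfl | rfl | rfl | rfl <;>
    simp [d1, abs_eq_one_of, Or.inl rfl, Or.inr rfl]

lemma nbrs_symm {x y : Site} (h : y ∈ nbrs x) : x ∈ nbrs y := by
  rcases mem_nbrs.1 h with rfl | rfl | rfl | rfl <;> rw [mem_nbrs]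
  · exact Or.inr (Or.inl (by simp [Prod.ext_iff]))
  · exact Or.inl (by simp [Prod.ext_iff])
  · exact Or.inr (Or.inr (Or.inr (by simp [Prod.ext_iff])))
  · exact Or.inr (Or.inr (Or.inl (by simp [Prod.ext_iff])))

lemma mem_l1Comp_self {S : Set Site} {x : Site} (hx : x ∈ S) : x ∈ l1Comp S x :=
  chainIn_single hx

lemma l1Comp_eq_of_adj {S : Set Site} {x y : Site} (hx : x ∈ S) (hy : y ∈ S)
    (h : d1 x y = 1) : l1Comp S x = l1Comp S y := by
  ext z
  constructor
  · intro hz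
    exact chainIn_trans (chainIn_step hy hx (by rw [d1_symm]; exact h)) hz
  · intro hz
    exact chainIn_trans (chainIn_step hx hy h) hz

lemma l1Comp_infinite_of_ray {S : Set Site} {x : Site} (f : ℕ → Site) (hf0 : f 0 = x)
    (hstep : ∀ n, d1 (f n) (f (n + 1)) = 1) (hmem : ∀ n, f n ∈ S)
    (hinj : Function.Injective f) : (l1Comp S x).Infinite := by
  have h : ∀ n, f n ∈ l1Comp S x := by
    intro n
    induction n with
    | zero => rw [hf0]; exact chainIn_single (hf0 ▸ hmem 0)
    | succ n ih => exact chainIn_trans ih (chainIn_step (hmem n) (hmem (n + 1)) (hstep n))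
  exact Set.infinite_of_injective_forall_mem hinj h

lemma comp_infinite_of_not_mem_box {l : ℕ} {C : Finset Site} (hC : ∀ c ∈ C, c ∈ lamBox l)
    {x : Site} (hx : x ∉ lamBox l) : (l1Comp ((↑C : Set Site)ᶜ) x).Infinite := by
  have hxy : x.1 < lamLo l ∨ lamHi l < x.1 ∨ x.2 < lamLo l ∨ lamHi l < x.2 := by
    by_contra h
    push_neg at h
    exact hx (mem_lamBox.2 ⟨h.1, h.2.1, h.2.2.1, h.2.2.2⟩)
  obtain ⟨u, hu, hout⟩ : ∃ u : Site, (u = ((1:ℤ),(0:ℤ)) ∨ u = (-1,0) ∨ u = (0,1) ∨ u = (0,-1)) ∧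
      ∀ n : ℕ, (x.1 + n * u.1, x.2 + n * u.2) ∉ lamBox l := by
    rcases hxy with h | h | h | h
    · exact ⟨(-1,0), by simp, fun n hn => by have := (mem_lamBox.1 hn).1; simp at this; omega⟩
    · exact ⟨(1,0), by simp, fun n hn => by have := (mem_lamBox.1 hn).2.1; simp at this; omega⟩
    · exact ⟨(0,-1), by simp, fun n hn => by have := (mem_lamBox.1 hn).2.2.1; simp at this; omega⟩
    · exact ⟨(0,1), by simp, fun n hn => by have := (mem_lamBox.1 hn).2.2.2; simp at this; omega⟩
  apply l1Comp_infinite_of_ray (f := fun n : ℕ => (x.1 + n * u.1, x.2 + n * u.2))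
  · simp
  · intro n
    rcases hu with rfl | rfl | rfl | rfl <;>
      · simp only [d1]
        push_cast
        ring_nf
        norm_num
  · intro n
    exact fun hmem => hout n (hC _ hmem)
  · intro a b hab
    simp only [Prod.ext_iff] at hab
    rcases hu with rfl | rfl | rfl | rfl <;> simp at hab <;> omega

/-- The cluster of an ε-contour is inside the box. -/
lemma cluster_subset_box {l : ℕ} {σ : Site → ℤ} {ε : ℤ} {C : Finset Site}
    (hC : IsCluster l σ ε C) : ∀ c ∈ C, c ∈ lamBox l := fun c hc => (hC.2.1 c hc).1

/-- The region of an ε-contour is inside the box. -/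
lemma fill_subset_box {l : ℕ} {σ : Site → ℤ} {ε : ℤ} {C : Finset Site}
    (hC : IsCluster l σ ε C) {x : Site} (hx : x ∈ fill C) : x ∈ lamBox l := by
  by_contra hxb
  rcases hx with hx | hx
  · exact hxb (cluster_subset_box hC x hx)
  · exact (comp_infinite_of_not_mem_box (cluster_subset_box hC) hxb) hx

/-- A site of the region adjacent to a site outside the region lies in the cluster. -/
lemma boundary_mem_cluster {l : ℕ} {σ : Site → ℤ} {ε : ℤ} {C : Finset Site}
    (hC : IsCluster l σ ε C) {x y : Site} (hx : x ∈ fill C) (hy : y ∉ fill C)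
    (hxy : d1 x y = 1) : x ∈ C := by
  by_contra hxC
  have hxf : (l1Comp ((↑C : Set Site)ᶜ) x).Finite := by
    rcases hx with hx | hx
    · exact absurd hx hxC
    · exact hx
  have hyC : y ∉ C := fun h => hy (Or.inl h)
  have hyf : ¬ (l1Comp ((↑C : Set Site)ᶜ) y).Finite := fun h => hy (Or.inr h)
  rw [l1Comp_eq_of_adj (show x ∈ ((↑C : Set Site)ᶜ) from hxC)
    (show y ∈ ((↑C : Set Site)ᶜ) from hyC) hxy] at hxf
  exact hyf hxf

section Clusters

variable {l : ℕ} {σ : Site → ℤ} {ε : ℤ}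

lemma cluster_closure_aux {C' : Finset Site} (hC' : IsCluster l σ ε C') {S : Set Site}
    (hS : ∀ a ∈ S, a ∈ lamBox l ∧ σ a = ε) :
    ∀ L : List Site, L.Chain' (fun a b => d1 a b = 1) → (∀ a ∈ L, a ∈ S) →
      ∀ x z : Site, L.head? = some x → L.getLast? = some z → x ∈ C' → z ∈ C' := by
  intro L
  induction L with
  | nil => intro _ _ x z h; simp at h
  | cons a t ih =>
    intro hc hm x z hh hl hx
    have hax : a = x := by simpa using hh
    subst hax
    rcases t with _ | ⟨b, t'⟩
    · have : a = z := by simpa using hl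
      subst this; exact hx
    · have hb : b ∈ C' := by
        refine hC'.2.2.2 b (hS b (hm b (by simp))).1 (hS b (hm b (by simp))).2 ?_
        exact ⟨a, hx, (List.isChain_cons_cons.1 hc).1⟩
      exact ih (List.isChain_cons_cons.1 hc).2 (fun a' ha' => hm a' (by simp [ha'])) b z rfl
        (by rwa [List.getLast?_cons_cons] at hl) hb

lemma cluster_subset_of_mem {C C' : Finset Site} (h : IsCluster l σ ε C)
    (h' : IsCluster l σ ε C') {x : Site} (hx : x ∈ C) (hx' : x ∈ C') : C ⊆ C' := by
  intro z hz
  obtain ⟨L, hc, hh, hl, hm⟩ := h.2.2.1 x (by exact_mod_cast hx) z (by exact_mod_cast hz)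
  exact cluster_closure_aux h' (fun a ha => h.2.1 a (by exact_mod_cast ha)) L hc hm x z hh hl hx'

lemma cluster_eq_of_mem {C C' : Finset Site} (h : IsCluster l σ ε C)
    (h' : IsCluster l σ ε C') {x : Site} (hx : x ∈ C) (hx' : x ∈ C') : C = C' :=
  le_antisymm (cluster_subset_of_mem h h' hx hx') (cluster_subset_of_mem h' h hx' hx)

lemma mem_cluster_of_bdry {C Θ : Finset Site} (hC : IsCluster l σ ε C)
    (hfill : (↑Θ : Set Site) = fill C) {x y : Site} (hx : x ∈ Θ) (hy : y ∉ Θ)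
    (hxy : d1 x y = 1) : x ∈ C := by
  refine boundary_mem_cluster hC ?_ ?_ hxy
  · rw [← hfill]; exact_mod_cast hx
  · rw [← hfill]; exact_mod_cast hy

lemma theta_subset_box {C Θ : Finset Site} (hC : IsCluster l σ ε C)
    (hfill : (↑Θ : Set Site) = fill C) {x : Site} (hx : x ∈ Θ) : x ∈ lamBox l :=
  fill_subset_box hC (by rw [← hfill]; exact_mod_cast hx)

lemma spin_opp (hε : ε = 1 ∨ ε = -1) (hσ : ∀ x ∈ lamBox l, σ x = 1 ∨ σ x = -1)
    {C Θ : Finset Site} (hC : IsCluster l σ ε C) (hfill : (↑Θ : Set Site) = fill C)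
    {x y : Site} (hx : x ∈ Θ) (hy : y ∉ Θ) (hxy : d1 x y = 1) (hyB : y ∈ lamBox l) :
    σ x * σ y = -1 := by
  have hxC := mem_cluster_of_bdry hC hfill hx hy hxy
  have hxε : σ x = ε := (hC.2.1 x hxC).2
  have hyC : y ∉ C := by
    intro h
    apply hy
    have : (y : Site) ∈ fill C := Or.inl (by exact_mod_cast h)
    rw [← hfill] at this
    exact_mod_cast this
  have hyne : σ y ≠ ε := by
    intro h
    exact hyC (hC.2.2.2 y hyB h ⟨x, hxC, hxy⟩)
  have := hσ y hyB
  rcases hε with rfl | rfl <;> rcases this with h | h <;> rw [hxε, h] <;> first | rfl | (exfalso; exact hyne h)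

end Clusters

section Sums

lemma sum_nbrs {M : Type*} [AddCommMonoid M] (x : Site) (f : Site → M) :
    ∑ y ∈ nbrs x, f y =
      f (x.1 + 1, x.2) + (f (x.1 - 1, x.2) + (f (x.1, x.2 + 1) + f (x.1, x.2 - 1))) := by
  have h1 : ((x.1 + 1, x.2) : Site) ∉
      ({(x.1 - 1, x.2), (x.1, x.2 + 1), (x.1, x.2 - 1)} : Finset Site) := by
    simp only [Finset.mem_insert, Finset.mem_singleton, Prod.ext_iff]; omega
  have h2 : ((x.1 - 1, x.2) : Site) ∉ ({(x.1, x.2 + 1), (x.1, x.2 - 1)} : Finset Site) := by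
    simp only [Finset.mem_insert, Finset.mem_singleton, Prod.ext_iff]; omega
  have h3 : ((x.1, x.2 + 1) : Site) ∉ ({(x.1, x.2 - 1)} : Finset Site) := by
    simp only [Finset.mem_singleton, Prod.ext_iff]; omega
  rw [nbrs, Finset.sum_insert h1, Finset.sum_insert h2, Finset.sum_insert h3,
    Finset.sum_singleton]

lemma filter_nbrs_eq (B : Finset Site) (x : Site) :
    (nbrs x).filter (· ∈ B) = B.filter (· ∈ nbrs x) := by
  ext y; simp [Finset.mem_filter]; tauto

/-- Swapping the roles of `x` and `y` in a sum over neighbouring pairs of `B`. -/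
lemma sum_nbrs_swap {M : Type*} [AddCommMonoid M] (B : Finset Site) (f : Site → Site → M) :
    ∑ x ∈ B, ∑ y ∈ (nbrs x).filter (· ∈ B), f x y =
      ∑ x ∈ B, ∑ y ∈ (nbrs x).filter (· ∈ B), f y x := by
  have key : ∀ g : Site → Site → M,
      ∑ x ∈ B, ∑ y ∈ (nbrs x).filter (· ∈ B), g x y =
        ∑ x ∈ B, ∑ y ∈ B, if y ∈ nbrs x then g x y else 0 := by
    intro g
    refine Finset.sum_congr rfl fun x _ => ?_
    rw [filter_nbrs_eq, Finset.sum_filter]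
  rw [key, key, Finset.sum_comm]
  refine Finset.sum_congr rfl fun x _ => Finset.sum_congr rfl fun y _ => ?_
  by_cases h : y ∈ nbrs x
  · rw [if_pos h, if_pos (nbrs_symm h)]
  · rw [if_neg h, if_neg (fun h' => h (nbrs_symm h'))]

lemma card_Icc_le (l : ℕ) : (Finset.Icc (lamLo l) (lamHi l)).card ≤ l := by
  rw [Int.card_Icc]
  simp only [lamLo, lamHi]
  omega

/-- The number of pairs `(x, y)` with `x` in the box and `y` a neighbour outside is at
most `4l`. -/
lemma perimeter_le (l : ℕ) :
    ∑ x ∈ lamBox l, ((nbrs x).filter (· ∉ lamBox l)).card ≤ 4 * l := by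
  have expand : ∀ x : Site, ((nbrs x).filter (· ∉ lamBox l)).card =
      ((if ((x.1 + 1, x.2) : Site) ∉ lamBox l then 1 else 0) +
      ((if ((x.1 - 1, x.2) : Site) ∉ lamBox l then 1 else 0) +
      ((if ((x.1, x.2 + 1) : Site) ∉ lamBox l then 1 else 0) +
      (if ((x.1, x.2 - 1) : Site) ∉ lamBox l then 1 else 0)))) := by
    intro x
    rw [Finset.card_filter, sum_nbrs]
  have aux : ∀ (p : Site → Prop) (inst : DecidablePred p) (m : ℤ → Site),
      (∀ x ∈ lamBox l, p x → ∃ t ∈ Finset.Icc (lamLo l) (lamHi l), x = m t) →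
      ∑ x ∈ lamBox l, (if p x then 1 else 0) ≤ l := by
    intro p _ m h
    rw [← Finset.card_filter]
    have hsub : (lamBox l).filter p ⊆ (Finset.Icc (lamLo l) (lamHi l)).image m := by
      intro x hx
      rw [Finset.mem_filter] at hx
      obtain ⟨t, ht, rfl⟩ := h x hx.1 hx.2
      exact Finset.mem_image_of_mem m ht
    exact le_trans (Finset.card_le_card hsub)
      (le_trans Finset.card_image_le (card_Icc_le l))
  calc ∑ x ∈ lamBox l, ((nbrs x).filter (· ∉ lamBox l)).card
      = (∑ x ∈ lamBox l, if ((x.1 + 1, x.2) : Site) ∉ lamBox l then 1 else 0) +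
        ((∑ x ∈ lamBox l, if ((x.1 - 1, x.2) : Site) ∉ lamBox l then 1 else 0) +
        ((∑ x ∈ lamBox l, if ((x.1, x.2 + 1) : Site) ∉ lamBox l then 1 else 0) +
        (∑ x ∈ lamBox l, if ((x.1, x.2 - 1) : Site) ∉ lamBox l then 1 else 0))) := by
        rw [← Finset.sum_add_distrib, ← Finset.sum_add_distrib, ← Finset.sum_add_distrib]
        exact Finset.sum_congr rfl fun x _ => expand x
    _ ≤ l + (l + (l + l)) := by
        gcongr
        · refine aux _ inferInstance (fun t => (lamHi l, t)) fun x hx hp => ⟨x.2, ?_, ?_⟩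
          · rw [Finset.mem_Icc]
            have := mem_lamBox.1 hx
            exact ⟨this.2.2.1, this.2.2.2⟩
          · have hb := mem_lamBox.1 hx
            have : ¬ (lamLo l ≤ x.1 + 1 ∧ x.1 + 1 ≤ lamHi l ∧ lamLo l ≤ x.2 ∧ x.2 ≤ lamHi l) :=
              fun h => hp (mem_lamBox.2 (by simpa using h))
            have hx1 : x.1 = lamHi l := by omega
            exact Prod.ext hx1 rfl
        · refine aux _ inferInstance (fun t => (lamLo l, t)) fun x hx hp => ⟨x.2, ?_, ?_⟩
          · rw [Finset.mem_Icc]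
            have := mem_lamBox.1 hx
            exact ⟨this.2.2.1, this.2.2.2⟩
          · have hb := mem_lamBox.1 hx
            have : ¬ (lamLo l ≤ x.1 - 1 ∧ x.1 - 1 ≤ lamHi l ∧ lamLo l ≤ x.2 ∧ x.2 ≤ lamHi l) :=
              fun h => hp (mem_lamBox.2 (by simpa using h))
            have hx1 : x.1 = lamLo l := by omega
            exact Prod.ext hx1 rfl
        · refine aux _ inferInstance (fun t => (t, lamHi l)) fun x hx hp => ⟨x.1, ?_, ?_⟩
          · rw [Finset.mem_Icc]
            have := mem_lamBox.1 hx
            exact ⟨this.1, this.2.1⟩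
          · have hb := mem_lamBox.1 hx
            have : ¬ (lamLo l ≤ x.1 ∧ x.1 ≤ lamHi l ∧ lamLo l ≤ x.2 + 1 ∧ x.2 + 1 ≤ lamHi l) :=
              fun h => hp (mem_lamBox.2 (by simpa using h))
            have hx2 : x.2 = lamHi l := by omega
            exact Prod.ext rfl hx2
        · refine aux _ inferInstance (fun t => (t, lamLo l)) fun x hx hp => ⟨x.1, ?_, ?_⟩
          · rw [Finset.mem_Icc]
            have := mem_lamBox.1 hx
            exact ⟨this.1, this.2.1⟩
          · have hb := mem_lamBox.1 hx
            have : ¬ (lamLo l ≤ x.1 ∧ x.1 ≤ lamHi l ∧ lamLo l ≤ x.2 - 1 ∧ x.2 - 1 ≤ lamHi l) :=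
              fun h => hp (mem_lamBox.2 (by simpa using h))
            have hx2 : x.2 = lamLo l := by omega
            exact Prod.ext rfl hx2
    _ = 4 * l := by ring

lemma contour_card_le (Θ : Finset Site) :
    (contourOf Θ).card ≤ ∑ x ∈ Θ, ((nbrs x).filter (· ∉ Θ)).card :=
  le_trans Finset.card_biUnion_le (Finset.sum_le_sum fun _ _ => Finset.card_image_le)

open Classical in
lemma foldr_flipC_ofFn : ∀ {p : ℕ} (Θs : Fin p → Finset Site) (σ : Site → ℤ) (x : Site),
    ((List.ofFn Θs).foldr flipC σ) x =
      (-1 : ℤ) ^ (∑ j, if x ∈ Θs j then 1 else 0 : ℕ) * σ x := by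
  intro p
  induction p with
  | zero => intro Θs σ x; simp
  | succ n ih =>
    intro Θs σ x
    rw [List.ofFn_succ, List.foldr_cons, Fin.sum_univ_succ]
    simp only [flipC]
    by_cases hx : x ∈ Θs 0
    · rw [if_pos hx, if_pos hx, ih, pow_add, pow_one]
      ring
    · rw [if_neg hx, if_neg hx, ih]
      ring_nf

end Sums

end Aux
set_option maxHeartbeats 1000000

/-- If (ε)-contours `γ₁,…,γ_p` at `σ` in `Λ(l)` satisfy
`(1/2)Δ_{γ₁,…,γ_p}H^ω(σ) ≥ c₁ l - c₂` with `c₁, c₂ ≥ 0`, then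
`(1/2)Δ_{γ₁,…,γ_p}H^ω(σ) ≥ (c₁/(c₁+8)) ∑_j |γ_j| - c₂`. -/
theorem stmt7 (l : ℕ) (σ : Site → ℤ) (hσ : ∀ x ∈ lamBox l, σ x = 1 ∨ σ x = -1)
    (ε : ℤ) (hε : ε = 1 ∨ ε = -1) (ω : Site → ℝ)
    (hω : ∀ y ∈ extBdry l, |ω y| ≤ 1)
    (p : ℕ) (Θs : Fin p → Finset Site)
    (hcs : ∀ j, IsEContour l σ ε (Θs j)) (hinj : Function.Injective Θs)
    (c₁ c₂ : ℝ) (hc₁ : 0 ≤ c₁) (hc₂ : 0 ≤ c₂)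
    (hyp : (1/2 : ℝ) * dH l ω (List.ofFn Θs) σ ≥ c₁ * l - c₂) :
    (1/2 : ℝ) * dH l ω (List.ofFn Θs) σ ≥
      c₁ / (c₁ + 8) * ∑ j, ((contourOf (Θs j)).card : ℝ) - c₂ := by
  classical
  have hcl : ∀ j, IsCluster l σ ε ((hcs j).choose) ∧
      (↑(Θs j) : Set Site) = fill ((hcs j).choose) := fun j => (hcs j).choose_spec
  set C : Fin p → Finset Site := fun j => (hcs j).choose with hCdef
  set B : Finset Site := lamBox l with hBdef
  -- distinct contours have disjoint clusters
  have hdisj : ∀ j k : Fin p, ∀ a : Site, a ∈ C j → a ∈ C k → j = k := by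
    intro j k a haj hak
    by_contra hne
    apply hne
    apply hinj
    apply Finset.coe_injective
    rw [(hcl j).2, (hcl k).2, cluster_eq_of_mem (hcl j).1 (hcl k).1 haj hak]
  have hbox : ∀ j, ∀ x ∈ Θs j, x ∈ B :=
    fun j x hx => theta_subset_box (hcl j).1 (hcl j).2 hx
  -- the split predicate
  set sp : Fin p → Site → Site → Prop :=
    fun j x y => (x ∈ Θs j ∧ y ∉ Θs j) ∨ (x ∉ Θs j ∧ y ∈ Θs j) with hspdef
  have hsp_cluster : ∀ j (x y : Site), d1 x y = 1 → x ∈ Θs j → y ∉ Θs j → x ∈ C j :=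
    fun j x y h hx hy => mem_cluster_of_bdry (hcl j).1 (hcl j).2 hx hy h
  have hCsubΘ : ∀ j (y : Site), y ∈ C j → y ∈ Θs j := by
    intro j y hy
    have h1 : (y : Site) ∈ fill (C j) := Or.inl (by exact_mod_cast hy)
    rw [← (hcl j).2] at h1
    exact_mod_cast h1
  -- at most one contour separates a given pair of neighbours
  have hsp_unique : ∀ x y : Site, d1 x y = 1 → y ∈ B →
      ∀ j k, sp j x y → sp k x y → j = k := by
    intro x y hxy hyB j k hj hk
    have hyx : d1 y x = 1 := by rw [d1_symm]; exact hxy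
    rcases hj with ⟨hxj, hyj⟩ | ⟨hxj, hyj⟩ <;> rcases hk with ⟨hxk, hyk⟩ | ⟨hxk, hyk⟩
    · exact hdisj j k x (hsp_cluster j x y hxy hxj hyj) (hsp_cluster k x y hxy hxk hyk)
    · exfalso
      have hxCj := hsp_cluster j x y hxy hxj hyj
      have hyCk := hsp_cluster k y x hyx hyk hxk
      have hyCj : y ∈ C j :=
        ((hcl j).1).2.2.2 y hyB (((hcl k).1).2.1 y hyCk).2 ⟨x, hxCj, hxy⟩
      exact hyj (hCsubΘ j y hyCj)
    · exfalso
      have hxCk := hsp_cluster k x y hxy hxk hyk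
      have hyCj := hsp_cluster j y x hyx hyj hxj
      have hyCk : y ∈ C k :=
        ((hcl k).1).2.2.2 y hyB (((hcl j).1).2.1 y hyCj).2 ⟨x, hxCk, hxy⟩
      exact hyk (hCsubΘ k y hyCk)
    · exact hdisj j k y (hsp_cluster j y x hyx hyj hxj) (hsp_cluster k y x hyx hyk hxk)
  -- a separated pair of neighbours inside the box has opposite spins
  have hsp_spin : ∀ j (x y : Site), d1 x y = 1 → x ∈ B → y ∈ B → sp j x y →
      σ x * σ y = -1 := by
    intro j x y hxy hxB hyB hj
    rcases hj with ⟨hxj, hyj⟩ | ⟨hxj, hyj⟩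
    · exact spin_opp hε hσ (hcl j).1 (hcl j).2 hxj hyj hxy hyB
    · rw [mul_comm]
      exact spin_opp hε hσ (hcl j).1 (hcl j).2 hyj hxj (by rw [d1_symm]; exact hxy) hxB
  -- the sign of the flip
  set cnt : Site → ℕ := fun x => ∑ j, if x ∈ Θs j then 1 else 0 with hcnt
  set sgn : Site → ℤ := fun x => (-1) ^ (cnt x) with hsgn
  have hτ : (List.ofFn Θs).foldr flipC σ = fun x => sgn x * σ x :=
    funext fun x => foldr_flipC_ofFn Θs σ x
  have hsgn_pm : ∀ x, sgn x = 1 ∨ sgn x = -1 := by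
    intro x
    rcases Nat.even_or_odd (cnt x) with h | h
    · left; exact h.neg_one_pow
    · right; exact h.neg_one_pow
  -- the per-pair identity
  have hpair : ∀ x ∈ B, ∀ y ∈ B, y ∈ nbrs x →
      ((sgn x * sgn y - 1) * (σ x * σ y) : ℤ) =
        2 * ∑ j, (if sp j x y then (1 : ℤ) else 0) := by
    intro x hxB y hyB hy
    have hxy := d1_of_mem_nbrs hy
    by_cases hex : ∃ j, sp j x y
    · obtain ⟨j0, hj0⟩ := hex
      have hsum : ∑ j, (if sp j x y then (1 : ℤ) else 0) = 1 := by
        rw [Finset.sum_eq_single j0]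
        · exact if_pos hj0
        · exact fun k _ hk => if_neg fun h => hk (hsp_unique x y hxy hyB k j0 h hj0)
        · exact fun h => absurd (Finset.mem_univ j0) h
      rw [hsum]
      have hσσ := hsp_spin j0 x y hxy hxB hyB hj0
      have hodd : Odd (cnt x + cnt y) := by
        have hsplit : cnt x + cnt y =
            ∑ j, ((if x ∈ Θs j then 1 else 0) + (if y ∈ Θs j then 1 else 0)) := by
          rw [Finset.sum_add_distrib]
        rw [hsplit, ← Finset.add_sum_erase _ _ (Finset.mem_univ j0)]
        have h1 : (if x ∈ Θs j0 then 1 else 0) + (if y ∈ Θs j0 then 1 else 0) = 1 := by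
          rcases hj0 with ⟨ha, hb⟩ | ⟨ha, hb⟩ <;> simp [ha, hb]
        rw [h1]
        have heven : Even (∑ j ∈ Finset.univ.erase j0,
            ((if x ∈ Θs j then 1 else 0) + (if y ∈ Θs j then 1 else 0))) := by
          refine Finset.even_sum _ fun k hk => ?_
          have hknotsp : ¬ sp k x y :=
            fun h => (Finset.mem_erase.1 hk).1 (hsp_unique x y hxy hyB k j0 h hj0)
          rw [hspdef] at hknotsp
          by_cases h : x ∈ Θs k
          · have h' : y ∈ Θs k := by
              by_contra hy'
              exact hknotsp (Or.inl ⟨h, hy'⟩)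
            rw [if_pos h, if_pos h']
            exact ⟨1, rfl⟩
          · have h' : y ∉ Θs k := fun hy' => hknotsp (Or.inr ⟨h, hy'⟩)
            rw [if_neg h, if_neg h']
            exact ⟨0, rfl⟩
        obtain ⟨c, hc⟩ := heven
        exact ⟨c, by omega⟩
      have hsgnxy : sgn x * sgn y = -1 := by
        simp only [hsgn]
        rw [← pow_add]
        exact hodd.neg_one_pow
      rw [hsgnxy, hσσ]
      ring
    · have hz : ∑ j, (if sp j x y then (1 : ℤ) else 0) = 0 :=
        Finset.sum_eq_zero fun j _ => if_neg fun h => hex ⟨j, h⟩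
      rw [hz]
      have hiff : ∀ j : Fin p, (x ∈ Θs j) ↔ (y ∈ Θs j) := by
        intro j
        by_contra h
        apply hex
        refine ⟨j, ?_⟩
        rw [hspdef]
        by_cases hx1 : x ∈ Θs j <;> by_cases hy1 : y ∈ Θs j <;> tauto
      have hcxy : cnt x = cnt y := by
        refine Finset.sum_congr rfl fun j _ => ?_
        by_cases h : x ∈ Θs j
        · rw [if_pos h, if_pos ((hiff j).1 h)]
        · rw [if_neg h, if_neg (fun h' => h ((hiff j).2 h'))]
      have hsgnxy : sgn x * sgn y = 1 := by
        simp only [hsgn]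
        rw [hcxy, ← pow_add]
        exact Even.neg_one_pow ⟨cnt y, rfl⟩
      rw [hsgnxy]
      ring
  -- expand dH into a bulk term and a boundary term
  have hdH : dH l ω (List.ofFn Θs) σ =
      (∑ x ∈ B, ∑ y ∈ (nbrs x).filter (· ∈ B),
        (1 / 2 : ℝ) * (((sgn x * sgn y - 1) * (σ x * σ y) : ℤ) : ℝ)) +
      ∑ x ∈ B, ∑ y ∈ (nbrs x).filter (· ∉ B),
        (((sgn x - 1) * σ x : ℤ) : ℝ) * ω y := by
    rw [dH, hτ]
    simp only [Ham, ← hBdef]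
    have h1 : (∑ x ∈ B, ∑ y ∈ (nbrs x).filter (· ∈ B), ((sgn x * σ x * (sgn y * σ y) : ℤ) : ℝ))
        - ∑ x ∈ B, ∑ y ∈ (nbrs x).filter (· ∈ B), ((σ x * σ y : ℤ) : ℝ)
        = ∑ x ∈ B, ∑ y ∈ (nbrs x).filter (· ∈ B),
            (((sgn x * sgn y - 1) * (σ x * σ y) : ℤ) : ℝ) := by
      rw [← Finset.sum_sub_distrib]
      refine Finset.sum_congr rfl fun x _ => ?_
      rw [← Finset.sum_sub_distrib]
      refine Finset.sum_congr rfl fun y _ => ?_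
      push_cast
      ring
    have h2 : (∑ x ∈ B, ∑ y ∈ (nbrs x).filter (· ∉ B), ((sgn x * σ x : ℤ) : ℝ) * ω y)
        - ∑ x ∈ B, ∑ y ∈ (nbrs x).filter (· ∉ B), ((σ x : ℤ) : ℝ) * ω y
        = ∑ x ∈ B, ∑ y ∈ (nbrs x).filter (· ∉ B), (((sgn x - 1) * σ x : ℤ) : ℝ) * ω y := by
      rw [← Finset.sum_sub_distrib]
      refine Finset.sum_congr rfl fun x _ => ?_
      rw [← Finset.sum_sub_distrib]
      refine Finset.sum_congr rfl fun y _ => ?_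
      push_cast
      ring
    have hhalf : ∑ x ∈ B, ∑ y ∈ (nbrs x).filter (· ∈ B),
        (1 / 2 : ℝ) * (((sgn x * sgn y - 1) * (σ x * σ y) : ℤ) : ℝ)
        = (1/2 : ℝ) * ∑ x ∈ B, ∑ y ∈ (nbrs x).filter (· ∈ B),
            (((sgn x * sgn y - 1) * (σ x * σ y) : ℤ) : ℝ) := by
      rw [Finset.mul_sum]
      refine Finset.sum_congr rfl fun x _ => ?_
      rw [Finset.mul_sum]
    rw [hhalf]
    linarith [h1, h2]
  -- bulk term equals the number of separated neighbouring pairs in the box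
  have hN : (∑ x ∈ B, ∑ y ∈ (nbrs x).filter (· ∈ B),
      (1 / 2 : ℝ) * (((sgn x * sgn y - 1) * (σ x * σ y) : ℤ) : ℝ)) =
      ∑ x ∈ B, ∑ y ∈ (nbrs x).filter (· ∈ B), ∑ j, (if sp j x y then (1 : ℝ) else 0) := by
    refine Finset.sum_congr rfl fun x hx => Finset.sum_congr rfl fun y hy => ?_
    rw [Finset.mem_filter] at hy
    rw [hpair x hx y hy.2 hy.1]
    push_cast
    ring
  -- reorganise: sum over contours first
  have hswap : ∑ x ∈ B, ∑ y ∈ (nbrs x).filter (· ∈ B), ∑ j, (if sp j x y then (1 : ℝ) else 0)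
      = ∑ j, ∑ x ∈ B, ∑ y ∈ (nbrs x).filter (· ∈ B), (if sp j x y then (1 : ℝ) else 0) := by
    rw [Finset.sum_comm]
    exact Finset.sum_congr rfl fun x _ => Finset.sum_comm
  -- each contour's count doubles the one-sided count
  have hone : ∀ j, ∑ x ∈ B, ∑ y ∈ (nbrs x).filter (· ∈ B), (if sp j x y then (1 : ℝ) else 0)
      = 2 * ∑ x ∈ B, ∑ y ∈ (nbrs x).filter (· ∈ B),
          (if x ∈ Θs j ∧ y ∉ Θs j then (1 : ℝ) else 0) := by
    intro j
    have hsplit : ∀ x y : Site, (if sp j x y then (1 : ℝ) else 0) =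
        (if x ∈ Θs j ∧ y ∉ Θs j then (1 : ℝ) else 0) +
        (if x ∉ Θs j ∧ y ∈ Θs j then (1 : ℝ) else 0) := by
      intro x y
      by_cases h1 : x ∈ Θs j <;> by_cases h2 : y ∈ Θs j <;> simp [hspdef, h1, h2]
    calc ∑ x ∈ B, ∑ y ∈ (nbrs x).filter (· ∈ B), (if sp j x y then (1 : ℝ) else 0)
        = (∑ x ∈ B, ∑ y ∈ (nbrs x).filter (· ∈ B),
            (if x ∈ Θs j ∧ y ∉ Θs j then (1 : ℝ) else 0)) +
          ∑ x ∈ B, ∑ y ∈ (nbrs x).filter (· ∈ B),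
            (if x ∉ Θs j ∧ y ∈ Θs j then (1 : ℝ) else 0) := by
          rw [← Finset.sum_add_distrib]
          refine Finset.sum_congr rfl fun x _ => ?_
          rw [← Finset.sum_add_distrib]
          exact Finset.sum_congr rfl fun y _ => hsplit x y
      _ = (∑ x ∈ B, ∑ y ∈ (nbrs x).filter (· ∈ B),
            (if x ∈ Θs j ∧ y ∉ Θs j then (1 : ℝ) else 0)) +
          ∑ x ∈ B, ∑ y ∈ (nbrs x).filter (· ∈ B),
            (if x ∈ Θs j ∧ y ∉ Θs j then (1 : ℝ) else 0) := by
          congr 1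
          rw [sum_nbrs_swap B (fun x y => if x ∉ Θs j ∧ y ∈ Θs j then (1 : ℝ) else 0)]
          refine Finset.sum_congr rfl fun x _ => Finset.sum_congr rfl fun y _ => ?_
          exact if_congr ⟨fun h => ⟨h.2, h.1⟩, fun h => ⟨h.2, h.1⟩⟩ rfl rfl
      _ = 2 * ∑ x ∈ B, ∑ y ∈ (nbrs x).filter (· ∈ B),
            (if x ∈ Θs j ∧ y ∉ Θs j then (1 : ℝ) else 0) := by ring
  -- the length of each contour is at most its separated pairs plus boundary pairs
  have hcard : ∀ j, ((contourOf (Θs j)).card : ℝ) ≤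
      (∑ x ∈ B, ∑ y ∈ (nbrs x).filter (· ∈ B), (if x ∈ Θs j ∧ y ∉ Θs j then (1 : ℝ) else 0))
      + ∑ x ∈ B, ∑ y ∈ (nbrs x).filter (· ∉ B), (if x ∈ Θs j then (1 : ℝ) else 0) := by
    intro j
    have step1 : ((contourOf (Θs j)).card : ℝ) ≤
        ∑ x ∈ Θs j, ∑ y ∈ nbrs x, (if y ∉ Θs j then (1 : ℝ) else 0) := by
      have h0 := contour_card_le (Θs j)
      have h1 : ((contourOf (Θs j)).card : ℝ) ≤
          ((∑ x ∈ Θs j, ((nbrs x).filter (· ∉ Θs j)).card : ℕ) : ℝ) := by exact_mod_cast h0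
      refine le_trans h1 (le_of_eq ?_)
      push_cast [Finset.card_filter]
      exact Finset.sum_congr rfl fun x _ => Finset.sum_congr rfl fun y _ => by
        split_ifs <;> simp
    have step2 : ∑ x ∈ Θs j, ∑ y ∈ nbrs x, (if y ∉ Θs j then (1 : ℝ) else 0)
        = ∑ x ∈ B, ∑ y ∈ nbrs x, (if x ∈ Θs j ∧ y ∉ Θs j then (1 : ℝ) else 0) := by
      have e1 : ∑ x ∈ Θs j, ∑ y ∈ nbrs x, (if y ∉ Θs j then (1 : ℝ) else 0)
          = ∑ x ∈ Θs j, ∑ y ∈ nbrs x, (if x ∈ Θs j ∧ y ∉ Θs j then (1 : ℝ) else 0) :=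
        Finset.sum_congr rfl fun x hx => Finset.sum_congr rfl fun y _ =>
          if_congr (by simp [hx]) rfl rfl
      rw [e1]
      exact Finset.sum_subset (hbox j) fun x _ hx =>
        Finset.sum_eq_zero fun y _ => if_neg fun h => hx h.1
    have step3 : ∑ x ∈ B, ∑ y ∈ nbrs x, (if x ∈ Θs j ∧ y ∉ Θs j then (1 : ℝ) else 0)
        = (∑ x ∈ B, ∑ y ∈ (nbrs x).filter (· ∈ B), (if x ∈ Θs j ∧ y ∉ Θs j then (1 : ℝ) else 0))
          + ∑ x ∈ B, ∑ y ∈ (nbrs x).filter (· ∉ B),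
              (if x ∈ Θs j ∧ y ∉ Θs j then (1 : ℝ) else 0) := by
      rw [← Finset.sum_add_distrib]
      exact Finset.sum_congr rfl fun x _ =>
        (Finset.sum_filter_add_sum_filter_not (nbrs x) (· ∈ B) _).symm
    have step4 : ∑ x ∈ B, ∑ y ∈ (nbrs x).filter (· ∉ B),
        (if x ∈ Θs j ∧ y ∉ Θs j then (1 : ℝ) else 0)
        = ∑ x ∈ B, ∑ y ∈ (nbrs x).filter (· ∉ B), (if x ∈ Θs j then (1 : ℝ) else 0) := by
      refine Finset.sum_congr rfl fun x _ => Finset.sum_congr rfl fun y hy => ?_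
      rw [Finset.mem_filter] at hy
      refine if_congr ⟨fun h => h.1, fun h => ⟨h, fun hyΘ => hy.2 (hbox j y hyΘ)⟩⟩ rfl rfl
    calc ((contourOf (Θs j)).card : ℝ) ≤ _ := step1
      _ = _ := step2
      _ = _ := step3
      _ = _ := by rw [step4]
  -- total boundary pairs bound the sum of boundary counts
  have hbd : ∑ j, ∑ x ∈ B, ∑ y ∈ (nbrs x).filter (· ∉ B), (if x ∈ Θs j then (1 : ℝ) else 0)
      ≤ ∑ x ∈ B, (((nbrs x).filter (· ∉ B)).card : ℝ) := by
    rw [Finset.sum_comm]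
    refine Finset.sum_le_sum fun x hx => ?_
    rw [Finset.sum_comm]
    have hcard1 : ∀ y ∈ (nbrs x).filter (· ∉ B), ∑ j, (if x ∈ Θs j then (1 : ℝ) else 0) ≤ 1 := by
      intro y hy
      rw [Finset.mem_filter] at hy
      have hxy := d1_of_mem_nbrs hy.1
      by_cases hex : ∃ j : Fin p, x ∈ Θs j
      · obtain ⟨j0, hj0⟩ := hex
        have huniq : ∀ k : Fin p, x ∈ Θs k → k = j0 := by
          intro k hk
          refine hdisj k j0 x ?_ ?_
          · exact hsp_cluster k x y hxy hk fun h => hy.2 (hbox k y h)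
          · exact hsp_cluster j0 x y hxy hj0 fun h => hy.2 (hbox j0 y h)
        rw [Finset.sum_eq_single j0 (fun k _ hk => if_neg fun h => hk (huniq k h))
          (fun h => absurd (Finset.mem_univ j0) h), if_pos hj0]
      · push_neg at hex
        rw [Finset.sum_eq_zero fun j _ => if_neg (hex j)]
        norm_num
    calc ∑ y ∈ (nbrs x).filter (· ∉ B), ∑ j, (if x ∈ Θs j then (1 : ℝ) else 0)
        ≤ ∑ y ∈ (nbrs x).filter (· ∉ B), (1 : ℝ) := Finset.sum_le_sum hcard1
      _ = (((nbrs x).filter (· ∉ B)).card : ℝ) := by rw [Finset.sum_const]; simp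
  -- boundary energy bound
  have hEbound : ∑ x ∈ B, ∑ y ∈ (nbrs x).filter (· ∉ B), (((sgn x - 1) * σ x : ℤ) : ℝ) * ω y
      ≥ ∑ x ∈ B, (-2 : ℝ) * (((nbrs x).filter (· ∉ B)).card : ℝ) := by
    refine Finset.sum_le_sum fun x hx => ?_
    have hterm : ∀ y ∈ (nbrs x).filter (· ∉ B), (-2 : ℝ) ≤ (((sgn x - 1) * σ x : ℤ) : ℝ) * ω y := by
      intro y hy
      rw [Finset.mem_filter] at hy
      have hω1 : |ω y| ≤ 1 := hω y ⟨hy.2, x, hx, d1_of_mem_nbrs hy.1⟩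
      have hfac : |(((sgn x - 1) * σ x : ℤ) : ℝ)| ≤ 2 := by
        rcases hsgn_pm x with h | h <;> rcases hσ x hx with h2 | h2 <;>
          rw [h, h2] <;> norm_num
      have habs : |(((sgn x - 1) * σ x : ℤ) : ℝ) * ω y| ≤ 2 := by
        rw [abs_mul]
        calc |(((sgn x - 1) * σ x : ℤ) : ℝ)| * |ω y| ≤ 2 * 1 := by
              exact mul_le_mul hfac hω1 (abs_nonneg _) (by norm_num)
          _ = 2 := by norm_num
      have := neg_abs_le ((((sgn x - 1) * σ x : ℤ) : ℝ) * ω y)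
      linarith
    calc ∑ y ∈ (nbrs x).filter (· ∉ B), (((sgn x - 1) * σ x : ℤ) : ℝ) * ω y
        ≥ ∑ y ∈ (nbrs x).filter (· ∉ B), (-2 : ℝ) := Finset.sum_le_sum hterm
      _ = (((nbrs x).filter (· ∉ B)).card : ℝ) * (-2) := by rw [Finset.sum_const]; simp [mul_comm]
      _ = (-2 : ℝ) * (((nbrs x).filter (· ∉ B)).card : ℝ) := by ring
  -- perimeter bound
  have hP : ∑ x ∈ B, (((nbrs x).filter (· ∉ B)).card : ℝ) ≤ 4 * l := by
    have h0 := perimeter_le l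
    calc ∑ x ∈ B, (((nbrs x).filter (· ∉ B)).card : ℝ)
        = ((∑ x ∈ lamBox l, ((nbrs x).filter (· ∉ lamBox l)).card : ℕ) : ℝ) := by
          rw [hBdef]; push_cast; ring
      _ ≤ ((4 * l : ℕ) : ℝ) := by exact_mod_cast h0
      _ = 4 * l := by push_cast; ring
  -- the key Peierls-type estimate
  have key : (1/2 : ℝ) * dH l ω (List.ofFn Θs) σ ≥
      (∑ j, ((contourOf (Θs j)).card : ℝ)) - 8 * l := by
    have hEbound2 : ∑ x ∈ B, ∑ y ∈ (nbrs x).filter (· ∉ B), (((sgn x - 1) * σ x : ℤ) : ℝ) * ω y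
        ≥ -2 * ∑ x ∈ B, (((nbrs x).filter (· ∉ B)).card : ℝ) := by
      calc ∑ x ∈ B, ∑ y ∈ (nbrs x).filter (· ∉ B), (((sgn x - 1) * σ x : ℤ) : ℝ) * ω y
          ≥ ∑ x ∈ B, (-2 : ℝ) * (((nbrs x).filter (· ∉ B)).card : ℝ) := hEbound
        _ = -2 * ∑ x ∈ B, (((nbrs x).filter (· ∉ B)).card : ℝ) := by
            rw [Finset.mul_sum]
    have hsum1 : ∑ j, ∑ x ∈ B, ∑ y ∈ (nbrs x).filter (· ∈ B), (if sp j x y then (1 : ℝ) else 0)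
        = 2 * ∑ j, ∑ x ∈ B, ∑ y ∈ (nbrs x).filter (· ∈ B),
            (if x ∈ Θs j ∧ y ∉ Θs j then (1 : ℝ) else 0) := by
      rw [Finset.mul_sum]
      exact Finset.sum_congr rfl fun j _ => hone j
    have hsum2 : (∑ j, ((contourOf (Θs j)).card : ℝ)) ≤
        (∑ j, ∑ x ∈ B, ∑ y ∈ (nbrs x).filter (· ∈ B),
          (if x ∈ Θs j ∧ y ∉ Θs j then (1 : ℝ) else 0)) +
        ∑ j, ∑ x ∈ B, ∑ y ∈ (nbrs x).filter (· ∉ B), (if x ∈ Θs j then (1 : ℝ) else 0) := by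
      rw [← Finset.sum_add_distrib]
      exact Finset.sum_le_sum fun j _ => hcard j
    linarith [hdH, hN, hswap, hsum1, hsum2, hbd, hEbound2, hP]
  -- conclude by the two cases
  have hG0 : (0 : ℝ) ≤ ∑ j, ((contourOf (Θs j)).card : ℝ) :=
    Finset.sum_nonneg fun j _ => Nat.cast_nonneg _
  have h8 : (0 : ℝ) < c₁ + 8 := by linarith
  rcases le_or_gt (∑ j, ((contourOf (Θs j)).card : ℝ)) ((c₁ + 8) * l) with hcase | hcase
  · have hle : c₁ / (c₁ + 8) * ∑ j, ((contourOf (Θs j)).card : ℝ) ≤ c₁ * l := by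
      rw [div_mul_eq_mul_div, div_le_iff₀ h8]
      nlinarith
    linarith [hyp]
  · have hfrac : 8 / (c₁ + 8) * ∑ j, ((contourOf (Θs j)).card : ℝ) ≥ 8 * l := by
      rw [ge_iff_le, ← sub_nonneg]
      have heq : 8 / (c₁ + 8) * (∑ j, ((contourOf (Θs j)).card : ℝ)) - 8 * l
          = 8 / (c₁ + 8) * ((∑ j, ((contourOf (Θs j)).card : ℝ)) - (c₁ + 8) * l) := by
        field_simp
      rw [heq]
      have : (0:ℝ) ≤ (∑ j, ((contourOf (Θs j)).card : ℝ)) - (c₁ + 8) * l := by linarith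
      positivity
    have hsplit : c₁ / (c₁ + 8) * ∑ j, ((contourOf (Θs j)).card : ℝ)
        = (∑ j, ((contourOf (Θs j)).card : ℝ))
          - 8 / (c₁ + 8) * ∑ j, ((contourOf (Θs j)).card : ℝ) := by
      have hne : c₁ + 8 ≠ 0 := ne_of_gt h8
      rw [div_mul_eq_mul_div, div_mul_eq_mul_div, eq_sub_iff_add_eq, ← add_div, div_eq_iff hne]
      ring
    rw [hsplit]
    linarith [key]
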